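/- Let M ≥ 2 be an even integer, e ≥ 3 an integer, and Λ a finite abelian subgroup of (ℝ/ℤ)^e such that wt(y) ≤ M for all y ∈ Λ. Suppose x, x′ ∈ Λ satisfy wt(x) = wt(x′) = M and |supp(x) ∩ supp(x′)| = M/2. Then every coordinate of x and of x′ lies in {0, 1/2} (as elements of ℝ/ℤ). -/
import Mathlib


/-- The support of an element of `(ℝ/ℤ)^e`. -/
def supp {e : ℕ} (x : Fin e → AddCircle (1 : ℝ)) : Set (Fin e) := {i | x i ≠ 0}

/-- `wt x`: the number of nonzero coordinates. -/
noncomputable def wt {e : ℕ} (x : Fin e → AddCircle (1 : ℝ)) : ℕ := Nat.card (supp x)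

lemma wt_eq_ncard {e : ℕ} (x : Fin e → AddCircle (1 : ℝ)) : wt x = (supp x).ncard :=
  Nat.card_coe_set_eq _

lemma two_torsion {z : AddCircle (1 : ℝ)} (h : z + z = 0) :
    z = 0 ∨ z = (((1 : ℝ) / 2 : ℝ) : AddCircle (1 : ℝ)) := by
  induction z using QuotientAddGroup.induction_on with
  | H r =>
    have h2 : ((r + r : ℝ) : AddCircle (1 : ℝ)) = 0 := by
      rw [AddCircle.coe_add]; exact h
    rw [AddCircle.coe_eq_zero_iff] at h2
    obtain ⟨n, hn⟩ := h2
    simp only [zsmul_eq_mul, mul_one] at hn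
    rcases Int.even_or_odd n with ⟨m, hm⟩ | ⟨m, hm⟩
    · left
      have hr : r = (m : ℝ) := by
        have : (n : ℝ) = (m : ℝ) + (m : ℝ) := by exact_mod_cast hm
        linarith
      rw [hr, AddCircle.coe_eq_zero_iff]
      exact ⟨m, by simp⟩
    · right
      have hr : r = (m : ℝ) + 1 / 2 := by
        have : (n : ℝ) = 2 * (m : ℝ) + 1 := by exact_mod_cast hm
        linarith
      have hz : ((m : ℝ) : AddCircle (1 : ℝ)) = 0 := by
        rw [AddCircle.coe_eq_zero_iff]; exact ⟨m, by simp⟩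
      rw [hr, AddCircle.coe_add, hz, zero_add]

theorem stmt_8 (e M : ℕ) (hM : 2 ≤ M) (hMeven : Even M) (he : 3 ≤ e)
    (Λ : AddSubgroup (Fin e → AddCircle (1 : ℝ)))
    (hfin : (Λ : Set (Fin e → AddCircle (1 : ℝ))).Finite)
    (hwt : ∀ y ∈ Λ, wt y ≤ M)
    (x x' : Fin e → AddCircle (1 : ℝ)) (hx : x ∈ Λ) (hx' : x' ∈ Λ)
    (hwx : wt x = M) (hwx' : wt x' = M)
    (hint : Nat.card (supp x ∩ supp x' : Set (Fin e)) = M / 2) :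
    ∀ i : Fin e,
      (x i = 0 ∨ x i = (((1 : ℝ) / 2 : ℝ) : AddCircle (1 : ℝ))) ∧
      (x' i = 0 ∨ x' i = (((1 : ℝ) / 2 : ℝ) : AddCircle (1 : ℝ))) := by
  classical
  obtain ⟨k, hk⟩ := hMeven
  set S := supp x with hS
  set S' := supp x' with hS'
  have hcS : S.ncard = M := by rw [← wt_eq_ncard]; exact hwx
  have hcS' : S'.ncard = M := by rw [← wt_eq_ncard]; exact hwx'
  have hcI : (S ∩ S').ncard = k := by
    have := (Nat.card_coe_set_eq (S ∩ S')).symm.trans hint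
    omega
  have hD1 : (S \ S').ncard = k := by
    have h1 := Set.ncard_inter_add_ncard_diff_eq_ncard S S' (Set.toFinite _)
    omega
  have hD2 : (S' \ S).ncard = k := by
    have h1 := Set.ncard_inter_add_ncard_diff_eq_ncard S' S (Set.toFinite _)
    rw [Set.inter_comm] at h1
    omega
  have key : ∀ z ∈ Λ, ∀ A : Set (Fin e), A ⊆ supp z → A.ncard ≤ M := by
    intro z hz A hA
    refine le_trans (Set.ncard_le_ncard hA (Set.toFinite _)) ?_
    rw [← wt_eq_ncard]; exact hwt z hz
  have hdisj : Disjoint (S \ S') (S' \ S) := by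
    rw [Set.disjoint_left]
    intro j hj hj'
    exact hj'.2 hj.1
  have hUcard : ((S \ S') ∪ (S' \ S)).ncard = M := by
    rw [Set.ncard_union_eq hdisj (Set.toFinite _) (Set.toFinite _)]
    omega
  -- Step 1: on the intersection, x i + x' i = 0
  have step1 : ∀ i ∈ S ∩ S', x i + x' i = 0 := by
    intro i hi
    by_contra hne
    have hiU : i ∉ (S \ S') ∪ (S' \ S) := by
      rintro (hj | hj)
      · exact hj.2 hi.2
      · exact hj.2 hi.1
    have hsub : insert i ((S \ S') ∪ (S' \ S)) ⊆ supp (x + x') := by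
      rintro j (rfl | hj | hj)
      · exact hne
      · have hz : x' j = 0 := not_not.mp hj.2
        show x j + x' j ≠ 0
        rw [hz, add_zero]; exact hj.1
      · have hz : x j = 0 := not_not.mp hj.2
        show x j + x' j ≠ 0
        rw [hz, zero_add]; exact hj.1
    have hc := key (x + x') (Λ.add_mem hx hx') _ hsub
    rw [Set.ncard_insert_of_notMem hiU (Set.toFinite _), hUcard] at hc
    omega
  -- Step 2: on the intersection, x i = x' i
  have step2 : ∀ i ∈ S ∩ S', x i = x' i := by
    intro i hi
    by_contra hne
    have hiU : i ∉ (S \ S') ∪ (S' \ S) := by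
      rintro (hj | hj)
      · exact hj.2 hi.2
      · exact hj.2 hi.1
    have hsub : insert i ((S \ S') ∪ (S' \ S)) ⊆ supp (x - x') := by
      rintro j (rfl | hj | hj)
      · show x j - x' j ≠ 0
        exact sub_ne_zero_of_ne hne
      · have hz : x' j = 0 := not_not.mp hj.2
        show x j - x' j ≠ 0
        rw [hz, sub_zero]; exact hj.1
      · have hz : x j = 0 := not_not.mp hj.2
        show x j - x' j ≠ 0
        rw [hz, zero_sub, neg_ne_zero]; exact hj.1
    have hc := key (x - x') (Λ.sub_mem hx hx') _ hsub
    rw [Set.ncard_insert_of_notMem hiU (Set.toFinite _), hUcard] at hc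
    omega
  -- on the intersection, 2 x i = 0 and 2 x' i = 0
  have tor : ∀ i ∈ S ∩ S', x i + x i = 0 ∧ x' i + x' i = 0 := by
    intro i hi
    have h1 := step1 i hi
    have h2 := step2 i hi
    constructor
    · nth_rewrite 2 [h2]; exact h1
    · nth_rewrite 1 [← h2]; exact h1
  -- Step 3: on S \ S', 2 x i = 0
  have step3 : ∀ i ∈ S \ S', x i + x i = 0 := by
    intro i hi
    by_contra hne
    have hsub : insert i S' ⊆ supp (x + x + x') := by
      rintro j (rfl | hj)
      · show x j + x j + x' j ≠ 0
        have hz : x' j = 0 := not_not.mp hi.2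
        rw [hz, add_zero]; exact hne
      · show x j + x j + x' j ≠ 0
        by_cases hjS : j ∈ S
        · rw [(tor j ⟨hjS, hj⟩).1, zero_add]; exact hj
        · have hz : x j = 0 := not_not.mp hjS
          rw [hz, add_zero, zero_add]; exact hj
    have hc := key (x + x + x') (Λ.add_mem (Λ.add_mem hx hx) hx') _ hsub
    rw [Set.ncard_insert_of_notMem hi.2 (Set.toFinite _), hcS'] at hc
    omega
  -- Step 4: on S' \ S, 2 x' i = 0
  have step4 : ∀ i ∈ S' \ S, x' i + x' i = 0 := by
    intro i hi
    by_contra hne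
    have hsub : insert i S ⊆ supp (x + (x' + x')) := by
      rintro j (rfl | hj)
      · show x j + (x' j + x' j) ≠ 0
        have hz : x j = 0 := not_not.mp hi.2
        rw [hz, zero_add]; exact hne
      · show x j + (x' j + x' j) ≠ 0
        by_cases hjS : j ∈ S'
        · rw [(tor j ⟨hj, hjS⟩).2, add_zero]; exact hj
        · have hz : x' j = 0 := not_not.mp hjS
          rw [hz, add_zero, add_zero]; exact hj
    have hc := key (x + (x' + x')) (Λ.add_mem hx (Λ.add_mem hx' hx')) _ hsub
    rw [Set.ncard_insert_of_notMem hi.2 (Set.toFinite _), hcS] at hc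
    omega
  intro i
  constructor
  · by_cases hiS : i ∈ S
    · by_cases hiS' : i ∈ S'
      · exact two_torsion (tor i ⟨hiS, hiS'⟩).1
      · exact two_torsion (step3 i ⟨hiS, hiS'⟩)
    · exact Or.inl (not_not.mp hiS)
  · by_cases hiS' : i ∈ S'
    · by_cases hiS : i ∈ S
      · exact two_torsion (tor i ⟨hiS, hiS'⟩).2
      · exact two_torsion (step4 i ⟨hiS', hiS⟩)
    · exact Or.inl (not_not.mp hiS')
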